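/- For coprime positive integers h and k, the classical Dedekind sums satisfy the reciprocity law s(h,k) + s(k,h) = −1/4 + (h² + k² + 1)/(12hk). -/

import Mathlib

open scoped Classical

/-- The Dedekind symbol `((x))`. -/
noncomputable def dedekindSymbol (x : ℝ) : ℝ :=
  if ∃ n : ℤ, x = (n : ℝ) then 0 else Int.fract x - 1/2

/-- The classical Dedekind sum `s(h,k)`. -/
noncomputable def dedekindSum (h k : ℕ) : ℝ :=
  ∑ μ ∈ Finset.range k,
    dedekindSymbol ((μ : ℝ) / (k : ℝ)) * dedekindSymbol ((h : ℝ) * (μ : ℝ) / (k : ℝ))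

/- ### Auxiliary elementary sum formulas -/

lemma ds_sumsq_range (n : ℕ) : (∑ i ∈ Finset.range (n+1), i^2) * 6 = n*(n+1)*(2*n+1) := by
  induction n with
  | zero => simp
  | succ m ih =>
      rw [Finset.sum_range_succ, Nat.add_mul, ih]
      ring

lemma ds_sum_Ico_one {M : Type*} [AddCommMonoid M] (f : ℕ → M) {n : ℕ} (hn : 0 < n)
    (hf : f 0 = 0) :
    ∑ μ ∈ Finset.Ico 1 n, f μ = ∑ μ ∈ Finset.range n, f μ := by
  rw [Finset.range_eq_Ico, Finset.sum_eq_sum_Ico_succ_bot hn, hf, zero_add]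

lemma ds_S1 (n : ℕ) : (∑ μ ∈ Finset.Ico 1 (n+1), μ) * 2 = (n+1) * n := by
  rw [ds_sum_Ico_one _ (Nat.succ_pos n) rfl, Finset.sum_range_id_mul_two]
  simp

lemma ds_S2 (n : ℕ) : (∑ μ ∈ Finset.Ico 1 (n+1), μ^2) * 6 = (n+1) * n * (2*n+1) := by
  rw [ds_sum_Ico_one _ (Nat.succ_pos n) (by simp), ds_sumsq_range]
  ring

/- ### The bijection `μ ↦ h*μ % k` on `Ico 1 k` -/

lemma ds_mod_mem {h k μ : ℕ} (hcop : Nat.Coprime h k) (hμ : μ ∈ Finset.Ico 1 k) :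
    h * μ % k ∈ Finset.Ico 1 k := by
  rw [Finset.mem_Ico] at *
  obtain ⟨h1, h2⟩ := hμ
  have hk : 0 < k := by omega
  refine ⟨?_, Nat.mod_lt _ hk⟩
  by_contra hcon
  have h0 : h * μ % k = 0 := by omega
  have hdvd : k ∣ h * μ := Nat.dvd_of_mod_eq_zero h0
  have hdμ : k ∣ μ := Nat.Coprime.dvd_of_dvd_mul_left hcop.symm hdvd
  have := Nat.le_of_dvd (by omega) hdμ
  omega

lemma ds_mod_bij {M : Type*} [AddCommMonoid M] {h k : ℕ} (hcop : Nat.Coprime h k)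
    (g : ℕ → M) :
    ∑ μ ∈ Finset.Ico 1 k, g (h * μ % k) = ∑ μ ∈ Finset.Ico 1 k, g μ := by
  have hinj : ∀ x ∈ Finset.Ico 1 k, ∀ y ∈ Finset.Ico 1 k, h*x%k = h*y%k → x = y := by
    intro x hx y hy hxy
    rw [Finset.mem_Ico] at hx hy
    have hmod : x ≡ y [MOD k] :=
      Nat.ModEq.cancel_left_of_coprime (by rw [Nat.gcd_comm]; exact hcop) hxy
    have hx' : x % k = x := Nat.mod_eq_of_lt hx.2
    have hy' : y % k = y := Nat.mod_eq_of_lt hy.2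
    rwa [Nat.ModEq, hx', hy'] at hmod
  have himg : Finset.image (fun μ => h*μ%k) (Finset.Ico 1 k) = Finset.Ico 1 k := by
    apply Finset.eq_of_subset_of_card_le
    · intro x hx
      obtain ⟨μ, hμ, rfl⟩ := Finset.mem_image.1 hx
      exact ds_mod_mem hcop hμ
    · rw [Finset.card_image_of_injOn
        (fun x hx y hy hxy => hinj x (Finset.mem_coe.1 hx) y (Finset.mem_coe.1 hy) hxy)]
  conv_rhs => rw [← himg]
  rw [Finset.sum_image hinj]

/- ### Evaluating the Dedekind symbol -/

lemma ds_symbol_eval {a k : ℕ} (hk : 0 < k) (hnd : ¬ k ∣ a) :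
    dedekindSymbol ((a:ℝ)/(k:ℝ)) = ((a % k : ℕ) : ℝ)/(k:ℝ) - 1/2 := by
  have hk0 : (k:ℝ) ≠ 0 := Nat.cast_ne_zero.2 (by omega)
  have hni : ¬ ∃ n : ℤ, (a:ℝ)/(k:ℝ) = (n:ℝ) := by
    rintro ⟨n, hn⟩
    rw [div_eq_iff hk0] at hn
    have hn' : (a : ℤ) = n * k := by exact_mod_cast hn
    have : (k:ℤ) ∣ (a:ℤ) := ⟨n, by linarith⟩
    exact hnd (Int.natCast_dvd_natCast.mp this)
  rw [dedekindSymbol, if_neg hni]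
  have hnat : k * (a / k) + a % k = a := Nat.div_add_mod a k
  have h3 : (k:ℝ) * ((a/k : ℕ):ℝ) + ((a % k : ℕ):ℝ) = (a:ℝ) := by exact_mod_cast hnat
  have key : (a:ℝ)/(k:ℝ) = ((a / k : ℕ) : ℝ) + ((a % k : ℕ):ℝ)/(k:ℝ) := by
    rw [← h3]
    field_simp
  rw [key, Int.fract_natCast_add, Int.fract_eq_self.2 ⟨by positivity, by
    rw [div_lt_one (by positivity)]
    exact_mod_cast Nat.mod_lt a hk⟩]

lemma ds_eq (h k : ℕ) (hk : 0 < k) (hcop : Nat.Coprime h k) :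
    dedekindSum h k = ∑ μ ∈ Finset.Ico 1 k,
      ((μ:ℝ)/(k:ℝ) - 1/2) * (((h*μ % k : ℕ):ℝ)/(k:ℝ) - 1/2) := by
  have hz : dedekindSymbol 0 = 0 := by
    rw [dedekindSymbol, if_pos ⟨0, by simp⟩]
  rw [dedekindSum, Finset.range_eq_Ico, Finset.sum_eq_sum_Ico_succ_bot hk]
  simp only [Nat.cast_zero, zero_div, mul_zero, hz, zero_mul, zero_add]
  apply Finset.sum_congr rfl
  intro μ hμ
  rw [Finset.mem_Ico] at hμ
  have hnd1 : ¬ k ∣ μ := by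
    intro hd
    have := Nat.le_of_dvd (by omega) hd
    omega
  have hnd2 : ¬ k ∣ h*μ := by
    intro hd
    have hdμ : k ∣ μ := Nat.Coprime.dvd_of_dvd_mul_left hcop.symm hd
    have := Nat.le_of_dvd (by omega) hdμ
    omega
  have e1 := ds_symbol_eval hk hnd1
  rw [Nat.mod_eq_of_lt hμ.2] at e1
  have e2 := ds_symbol_eval hk hnd2
  have harg : (h:ℝ)*(μ:ℝ)/(k:ℝ) = ((h*μ:ℕ):ℝ)/(k:ℝ) := by push_cast; ring
  rw [harg, e1, e2]

lemma ds_closed (h k : ℕ) (hk : 0 < k) (hcop : Nat.Coprime h k) :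
    dedekindSum h k * (4 * (k:ℝ)^2) =
      4 * ((∑ μ ∈ Finset.Ico 1 k, μ * (h*μ % k) : ℕ) : ℝ) - (k:ℝ)^2 * ((k:ℝ) - 1) := by
  have hk0 : (k:ℝ) ≠ 0 := Nat.cast_ne_zero.2 (by omega)
  rw [ds_eq h k hk hcop, Finset.sum_mul]
  have step : ∀ μ ∈ Finset.Ico 1 k,
      (((μ:ℝ)/(k:ℝ) - 1/2) * (((h*μ % k : ℕ):ℝ)/(k:ℝ) - 1/2)) * (4*(k:ℝ)^2)
        = 4*((μ:ℝ) * ((h*μ%k : ℕ):ℝ)) - 2*(k:ℝ)*(μ:ℝ) - 2*(k:ℝ)*((h*μ%k:ℕ):ℝ) + (k:ℝ)^2 := by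
    intro μ _
    field_simp
    ring
  rw [Finset.sum_congr rfl step]
  rw [Finset.sum_add_distrib, Finset.sum_sub_distrib, Finset.sum_sub_distrib,
    ← Finset.mul_sum, ← Finset.mul_sum, ← Finset.mul_sum]
  have hbij : ∑ μ ∈ Finset.Ico 1 k, ((h*μ%k : ℕ):ℝ) = ∑ μ ∈ Finset.Ico 1 k, (μ:ℝ) :=
    ds_mod_bij hcop (fun n => (n:ℝ))
  rw [hbij]
  obtain ⟨m, rfl⟩ : ∃ m, k = m + 1 := ⟨k - 1, by omega⟩
  have hS1 : (∑ μ ∈ Finset.Ico 1 (m+1), (μ:ℝ)) * 2 = ((m:ℝ)+1)*(m:ℝ) := by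
    have := congrArg (Nat.cast (R := ℝ)) (ds_S1 m)
    push_cast at this
    exact this
  have hconst : ∑ _μ ∈ Finset.Ico 1 (m+1), ((m+1:ℕ):ℝ)^2 = (m:ℝ) * ((m+1:ℕ):ℝ)^2 := by
    rw [Finset.sum_const, Nat.card_Ico, nsmul_eq_mul]
    norm_num
  rw [hconst]
  have hPcast : ((∑ μ ∈ Finset.Ico 1 (m+1), μ * (h*μ % (m+1)) : ℕ) : ℝ)
      = ∑ μ ∈ Finset.Ico 1 (m+1), (μ:ℝ) * ((h*μ%(m+1) : ℕ):ℝ) := by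
    push_cast
    rfl
  rw [hPcast]
  push_cast
  linear_combination (-2*((m:ℝ)+1)) * hS1

/- ### The floor/mod decomposition identities -/

lemma ds_H1 (h k : ℕ) :
    h * (∑ μ ∈ Finset.Ico 1 k, μ^2) =
      k * (∑ μ ∈ Finset.Ico 1 k, μ * (h*μ/k)) + ∑ μ ∈ Finset.Ico 1 k, μ * (h*μ%k) := by
  rw [Finset.mul_sum, Finset.mul_sum, ← Finset.sum_add_distrib]
  apply Finset.sum_congr rfl
  intro μ _
  have hdm : k * (h*μ/k) + h*μ%k = h*μ := Nat.div_add_mod (h*μ) k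
  calc h * μ^2 = μ * (h*μ) := by ring
    _ = μ * (k*(h*μ/k) + h*μ%k) := by rw [hdm]
    _ = k*(μ*(h*μ/k)) + μ*(h*μ%k) := by ring

lemma ds_H2 (h k : ℕ) (hcop : Nat.Coprime h k) :
    h * (∑ μ ∈ Finset.Ico 1 k, μ) =
      k * (∑ μ ∈ Finset.Ico 1 k, h*μ/k) + ∑ μ ∈ Finset.Ico 1 k, μ := by
  have hbij : ∑ μ ∈ Finset.Ico 1 k, (h*μ%k) = ∑ μ ∈ Finset.Ico 1 k, μ :=
    ds_mod_bij hcop (fun n => n)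
  conv_rhs => rw [← hbij]
  rw [Finset.mul_sum, Finset.mul_sum, ← Finset.sum_add_distrib]
  apply Finset.sum_congr rfl
  intro μ _
  exact (Nat.div_add_mod (h*μ) k).symm

lemma ds_H3 (h k : ℕ) :
    h * (∑ μ ∈ Finset.Ico 1 k, μ * (h*μ/k)) =
      k * (∑ μ ∈ Finset.Ico 1 k, (h*μ/k)^2) + ∑ μ ∈ Finset.Ico 1 k, (h*μ/k) * (h*μ%k) := by
  rw [Finset.mul_sum, Finset.mul_sum, ← Finset.sum_add_distrib]
  apply Finset.sum_congr rfl
  intro μ _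
  have hdm : k * (h*μ/k) + h*μ%k = h*μ := Nat.div_add_mod (h*μ) k
  calc h * (μ * (h*μ/k)) = (h*μ/k) * (h*μ) := by ring
    _ = (h*μ/k) * (k*(h*μ/k) + h*μ%k) := by rw [hdm]
    _ = k*((h*μ/k)^2) + (h*μ/k)*(h*μ%k) := by ring

lemma ds_H4 (h k : ℕ) (hcop : Nat.Coprime h k) :
    h^2 * (∑ μ ∈ Finset.Ico 1 k, μ^2) =
      k^2 * (∑ μ ∈ Finset.Ico 1 k, (h*μ/k)^2)
        + 2*k*(∑ μ ∈ Finset.Ico 1 k, (h*μ/k) * (h*μ%k))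
        + ∑ μ ∈ Finset.Ico 1 k, μ^2 := by
  have hbij : ∑ μ ∈ Finset.Ico 1 k, (h*μ%k)^2 = ∑ μ ∈ Finset.Ico 1 k, μ^2 :=
    ds_mod_bij hcop (fun n => n^2)
  conv_rhs => rw [← hbij]
  rw [Finset.mul_sum, Finset.mul_sum, Finset.mul_sum, ← Finset.sum_add_distrib,
    ← Finset.sum_add_distrib]
  apply Finset.sum_congr rfl
  intro μ _
  have hdm : k * (h*μ/k) + h*μ%k = h*μ := Nat.div_add_mod (h*μ) k
  calc h^2 * μ^2 = (h*μ)^2 := by ring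
    _ = (k*(h*μ/k) + h*μ%k)^2 := by rw [hdm]
    _ = k^2*(h*μ/k)^2 + 2*k*((h*μ/k) * (h*μ%k)) + (h*μ%k)^2 := by ring

/- ### The key lattice-point double-counting identity -/

lemma ds_H5 (a b : ℕ) (hcop : Nat.Coprime (b+1) (a+1)) :
    2 * (∑ ν ∈ Finset.Ico 1 (b+1), ν * ((a+1)*ν/(b+1)))
      + ∑ μ ∈ Finset.Ico 1 (a+1), ((b+1)*μ/(a+1))^2
      + ∑ μ ∈ Finset.Ico 1 (a+1), (b+1)*μ/(a+1)
      = a * ((b+1)*b) := by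
  have hA : 0 < a + 1 := Nat.succ_pos a
  have hB : 0 < b + 1 := Nat.succ_pos b
  -- the per-μ splitting
  have key1 : ∀ μ ∈ Finset.Ico 1 (a+1),
      2 * (∑ ν ∈ Finset.Ico ((b+1)*μ/(a+1) + 1) (b+1), ν)
        + (((b+1)*μ/(a+1))^2 + (b+1)*μ/(a+1)) = (b+1)*b := by
    intro μ hμ
    rw [Finset.mem_Ico] at hμ
    have hdlt : (b+1)*μ/(a+1) < b + 1 :=
      (Nat.div_lt_iff_lt_mul hA).2 (mul_lt_mul_of_pos_left hμ.2 hB)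
    have hsplit := Finset.sum_Ico_consecutive (fun ν => ν)
      (Nat.succ_le_succ (Nat.zero_le _)) (Nat.succ_le_of_lt hdlt)
    have hg1 : (∑ ν ∈ Finset.Ico 1 ((b+1)*μ/(a+1)+1), ν) * 2
        = ((b+1)*μ/(a+1))^2 + (b+1)*μ/(a+1) := by
      rw [ds_S1 ((b+1)*μ/(a+1))]
      ring
    have hgh : (∑ ν ∈ Finset.Ico 1 (b+1), ν) * 2 = (b+1)*b := ds_S1 b
    linarith [hsplit, hg1, hgh]
  -- summing over μ
  have key2 : ∑ μ ∈ Finset.Ico 1 (a+1),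
      (2 * (∑ ν ∈ Finset.Ico ((b+1)*μ/(a+1) + 1) (b+1), ν)
        + (((b+1)*μ/(a+1))^2 + (b+1)*μ/(a+1))) = a * ((b+1)*b) := by
    rw [Finset.sum_congr rfl key1, Finset.sum_const, Nat.card_Ico, smul_eq_mul]
    simp
  rw [Finset.sum_add_distrib, Finset.sum_add_distrib, ← Finset.mul_sum] at key2
  -- the double-counting swap: W = A'
  have hswap : ∑ μ ∈ Finset.Ico 1 (a+1), ∑ ν ∈ Finset.Ico ((b+1)*μ/(a+1) + 1) (b+1), ν
      = ∑ ν ∈ Finset.Ico 1 (b+1), ν * ((a+1)*ν/(b+1)) := by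
    have hfil1 : ∀ μ : ℕ, Finset.Ico ((b+1)*μ/(a+1) + 1) (b+1)
        = (Finset.Ico 1 (b+1)).filter (fun ν => (b+1)*μ/(a+1) < ν) := by
      intro μ
      generalize (b+1)*μ/(a+1) = d
      ext ν
      simp only [Finset.mem_Ico, Finset.mem_filter]
      omega
    calc ∑ μ ∈ Finset.Ico 1 (a+1), ∑ ν ∈ Finset.Ico ((b+1)*μ/(a+1) + 1) (b+1), ν
        = ∑ μ ∈ Finset.Ico 1 (a+1), ∑ ν ∈ Finset.Ico 1 (b+1),
            (if (b+1)*μ/(a+1) < ν then ν else 0) := by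
          apply Finset.sum_congr rfl
          intro μ _
          rw [hfil1 μ, Finset.sum_filter]
      _ = ∑ ν ∈ Finset.Ico 1 (b+1), ∑ μ ∈ Finset.Ico 1 (a+1),
            (if (b+1)*μ/(a+1) < ν then ν else 0) := Finset.sum_comm
      _ = ∑ ν ∈ Finset.Ico 1 (b+1), ν * ((a+1)*ν/(b+1)) := by
          apply Finset.sum_congr rfl
          intro ν hν
          rw [Finset.mem_Ico] at hν
          have hfil2 : (Finset.Ico 1 (a+1)).filter (fun μ => (b+1)*μ/(a+1) < ν)
              = Finset.Ico 1 ((a+1)*ν/(b+1) + 1) := by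
            ext μ
            simp only [Finset.mem_filter, Finset.mem_Ico]
            constructor
            · rintro ⟨⟨h1, h2⟩, hlt⟩
              have hlt' : (b+1)*μ < ν*(a+1) := (Nat.div_lt_iff_lt_mul hA).1 hlt
              have hle : μ*(b+1) ≤ (a+1)*ν := by
                rw [mul_comm μ (b+1)]
                rw [mul_comm ν (a+1)] at hlt'
                exact le_of_lt hlt'
              have := (Nat.le_div_iff_mul_le hB).2 hle
              exact ⟨h1, Nat.lt_succ_of_le this⟩
            · rintro ⟨h1, h2⟩
              have hμe : μ ≤ (a+1)*ν/(b+1) := Nat.lt_succ_iff.mp h2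
              have hmul : μ*(b+1) ≤ (a+1)*ν := (Nat.le_div_iff_mul_le hB).1 hμe
              have hne : (b+1)*μ ≠ (a+1)*ν := by
                intro heq
                have hd1 : (b+1) ∣ (a+1)*ν := ⟨μ, heq.symm⟩
                have hd2 : (b+1) ∣ ν := Nat.Coprime.dvd_of_dvd_mul_left hcop hd1
                have := Nat.le_of_dvd (by omega) hd2
                omega
              have hlt : (b+1)*μ < ν*(a+1) := by
                rw [mul_comm μ (b+1)] at hmul
                rw [mul_comm ν (a+1)]
                exact lt_of_le_of_ne hmul hne
              have helt : (a+1)*ν/(b+1) < a+1 :=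
                (Nat.div_lt_iff_lt_mul hB).2 (mul_lt_mul_of_pos_left hν.2 hA)
              exact ⟨⟨h1, lt_of_le_of_lt (Nat.lt_succ_iff.mp h2) helt⟩,
                (Nat.div_lt_iff_lt_mul hA).2 hlt⟩
          rw [← Finset.sum_filter, hfil2, Finset.sum_const, Nat.card_Ico, smul_eq_mul]
          simp [mul_comm]
  rw [hswap] at key2
  linarith [key2]

/- ### The reciprocity law -/

theorem dedekind_reciprocity (h k : ℕ) (hh : 0 < h) (hk : 0 < k)
    (hcop : Nat.Coprime h k) :
    dedekindSum h k + dedekindSum k h =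
      -1/4 + ((h : ℝ)^2 + (k : ℝ)^2 + 1) / (12 * (h : ℝ) * (k : ℝ)) := by
  obtain ⟨a, rfl⟩ : ∃ a, k = a + 1 := ⟨k - 1, by omega⟩
  obtain ⟨b, rfl⟩ : ∃ b, h = b + 1 := ⟨h - 1, by omega⟩
  have hH0 : ((b:ℝ)+1) ≠ 0 := by positivity
  have hK0 : ((a:ℝ)+1) ≠ 0 := by positivity
  -- cast all the natural-number identities to ℝ
  have F1R := congrArg (Nat.cast (R := ℝ)) (ds_H1 (b+1) (a+1))
  have F2R := congrArg (Nat.cast (R := ℝ)) (ds_H2 (b+1) (a+1) hcop)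
  have F3R := congrArg (Nat.cast (R := ℝ)) (ds_H3 (b+1) (a+1))
  have F4R := congrArg (Nat.cast (R := ℝ)) (ds_H4 (b+1) (a+1) hcop)
  have F5R := congrArg (Nat.cast (R := ℝ)) (ds_H5 a b hcop)
  have F8R := congrArg (Nat.cast (R := ℝ)) (ds_H1 (a+1) (b+1))
  have FS1KR := congrArg (Nat.cast (R := ℝ)) (ds_S1 a)
  have FS2KR := congrArg (Nat.cast (R := ℝ)) (ds_S2 a)
  have FS2HR := congrArg (Nat.cast (R := ℝ)) (ds_S2 b)
  have G6R := ds_closed (b+1) (a+1) (Nat.succ_pos a) hcop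
  have G7R := ds_closed (a+1) (b+1) (Nat.succ_pos b) hcop.symm
  push_cast at F1R F2R F3R F4R F5R F8R FS1KR FS2KR FS2HR G6R G7R
  have KEY : 12*((b:ℝ)+1)^2*((a:ℝ)+1)^2*(dedekindSum (b+1) (a+1) + dedekindSum (a+1) (b+1))
      = ((b:ℝ)+1)^3*((a:ℝ)+1) + ((b:ℝ)+1)*((a:ℝ)+1)^3 + ((b:ℝ)+1)*((a:ℝ)+1)
        - 3*((b:ℝ)+1)^2*((a:ℝ)+1)^2 := by
    linear_combination 3*((b:ℝ)+1)^2*G6R + 3*((a:ℝ)+1)^2*G7R - 12*((a:ℝ)+1)^2*F8R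
      - 6*((b:ℝ)+1)*((a:ℝ)+1)^2*F5R + 6*((b:ℝ)+1)*F4R - 12*((b:ℝ)+1)*((a:ℝ)+1)*F3R
      - 12*((b:ℝ)+1)^2*F1R - 6*((b:ℝ)+1)*((a:ℝ)+1)*F2R
      + 3*((b:ℝ)+1)*((a:ℝ)+1)*(b:ℝ)*FS1KR + ((b:ℝ)+1)*(((b:ℝ)+1)^2+1)*FS2KR
      + 2*((a:ℝ)+1)^3*FS2HR
  have hden : (12*((b:ℝ)+1)^2*((a:ℝ)+1)^2) ≠ 0 := by positivity
  have hfin : dedekindSum (b+1) (a+1) + dedekindSum (a+1) (b+1)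
      = (((b:ℝ)+1)^3*((a:ℝ)+1) + ((b:ℝ)+1)*((a:ℝ)+1)^3 + ((b:ℝ)+1)*((a:ℝ)+1)
          - 3*((b:ℝ)+1)^2*((a:ℝ)+1)^2) / (12*((b:ℝ)+1)^2*((a:ℝ)+1)^2) := by
    rw [eq_div_iff hden]
    linear_combination KEY
  push_cast
  rw [hfin]
  have h12 : (12*((b:ℝ)+1)*((a:ℝ)+1)) ≠ 0 := by positivity
  field_simp
  ring
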